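/- Let P ⊆ ℝ^d be finite, Y ⊆ ℝ^d convex, φ₀, φ₁ : P → ℝ, p ∈ P, and v_i ∈ Lag_P^{φ_i}(p) ∩ Y for i = 0,1. Set φ_t = (1-t)φ₀ + tφ₁ and v_t = (1-t)v₀ + tv₁. Then the map t ∈ [0,1] ↦ dist(v_t, ℝ^d \\ (Lag_P^{φ_t}(p) ∩ Y)) is concave. -/

import Mathlib

open scoped RealInnerProductSpace Pointwise
open MeasureTheory

/-- The Laguerre cell of a point `p` for the function `φ` on the finite set `P`. -/
def Lag {d : ℕ} (P : Finset (EuclideanSpace ℝ (Fin d)))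
    (φ : EuclideanSpace ℝ (Fin d) → ℝ) (p : EuclideanSpace ℝ (Fin d)) :
    Set (EuclideanSpace ℝ (Fin d)) :=
  {y | ∀ q ∈ P, φ p + ⟪q - p, y⟫ ≤ φ q}

private lemma mem_lag_comb {d : ℕ} {P : Finset (EuclideanSpace ℝ (Fin d))}
    {p : EuclideanSpace ℝ (Fin d)} {ψ₀ ψ₁ : EuclideanSpace ℝ (Fin d) → ℝ} {a b : ℝ}
    (ha : 0 ≤ a) (hb : 0 ≤ b) (hab : a + b = 1)
    {x y : EuclideanSpace ℝ (Fin d)} (hx : x ∈ Lag P ψ₀ p) (hy : y ∈ Lag P ψ₁ p) :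
    a • x + b • y ∈ Lag P (fun z => a * ψ₀ z + b * ψ₁ z) p := by
  intro q hq
  have h0 := hx q hq
  have h1 := hy q hq
  have hinner : ⟪q - p, a • x + b • y⟫ = a * ⟪q - p, x⟫ + b * ⟪q - p, y⟫ := by
    rw [inner_add_right, real_inner_smul_right, real_inner_smul_right]
  have h0' := mul_le_mul_of_nonneg_left h0 ha
  have h1' := mul_le_mul_of_nonneg_left h1 hb
  simp only [Set.mem_setOf_eq]
  rw [hinner]
  nlinarith [h0', h1']

private lemma compl_lag_inter_nonempty {d : ℕ} {P : Finset (EuclideanSpace ℝ (Fin d))}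
    {p : EuclideanSpace ℝ (Fin d)} {Y : Set (EuclideanSpace ℝ (Fin d))}
    (ψ : EuclideanSpace ℝ (Fin d) → ℝ)
    (h : ¬ ((∀ q ∈ P, q = p) ∧ Y = Set.univ)) :
    ((Lag P ψ p ∩ Y)ᶜ).Nonempty := by
  by_cases hq : ∀ q ∈ P, q = p
  · have hY : Y ≠ Set.univ := fun hY => h ⟨hq, hY⟩
    obtain ⟨x, hx⟩ := (Set.ne_univ_iff_exists_notMem Y).mp hY
    exact ⟨x, fun hmem => hx hmem.2⟩
  · push_neg at hq
    obtain ⟨q, hqP, hqp⟩ := hq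
    have hn : (0:ℝ) < ‖q - p‖ ^ 2 := by
      have h0 : 0 < ‖q - p‖ := norm_pos_iff.mpr (sub_ne_zero_of_ne hqp)
      positivity
    set c : ℝ := (ψ q - ψ p + 1) / ‖q - p‖ ^ 2 with hc
    refine ⟨c • (q - p), fun hmem => ?_⟩
    have hLag := hmem.1 q hqP
    have hip : ⟪q - p, c • (q - p)⟫ = ψ q - ψ p + 1 := by
      rw [real_inner_smul_right, real_inner_self_eq_norm_sq, hc]
      have hq0 : ‖q - p‖ ≠ 0 := norm_ne_zero_iff.mpr (sub_ne_zero_of_ne hqp)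
      field_simp
    rw [hip] at hLag
    linarith

/-- Concavity of the distance to the complement of the trimmed Laguerre cell along a
linear interpolation of potentials and subgradients. -/
theorem dist_compl_Lag_concave {d : ℕ} (P : Finset (EuclideanSpace ℝ (Fin d)))
    (Y : Set (EuclideanSpace ℝ (Fin d))) (hYc : Convex ℝ Y)
    (φ₀ φ₁ : EuclideanSpace ℝ (Fin d) → ℝ)
    {p : EuclideanSpace ℝ (Fin d)} (hp : p ∈ P)
    {v₀ v₁ : EuclideanSpace ℝ (Fin d)}
    (hv₀ : v₀ ∈ Lag P φ₀ p ∩ Y) (hv₁ : v₁ ∈ Lag P φ₁ p ∩ Y) :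
    ConcaveOn ℝ (Set.Icc (0:ℝ) 1) (fun t =>
      Metric.infDist ((1 - t) • v₀ + t • v₁)
        ((Lag P (fun x => (1 - t) * φ₀ x + t * φ₁ x) p ∩ Y)ᶜ)) := by
  set V : ℝ → EuclideanSpace ℝ (Fin d) := fun τ => (1 - τ) • v₀ + τ • v₁ with hV
  set C : ℝ → Set (EuclideanSpace ℝ (Fin d)) :=
    fun τ => Lag P (fun x => (1 - τ) * φ₀ x + τ * φ₁ x) p ∩ Y with hC
  have hVmem : ∀ τ ∈ Set.Icc (0:ℝ) 1, V τ ∈ C τ := by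
    intro τ hτ
    obtain ⟨h0, h1⟩ := hτ
    constructor
    · exact mem_lag_comb (by linarith) h0 (by linarith) hv₀.1 hv₁.1
    · exact hYc hv₀.2 hv₁.2 (by linarith) h0 (by linarith)
  refine ⟨convex_Icc 0 1, ?_⟩
  intro s hs t ht a b ha hb hab
  simp only [smul_eq_mul]
  set r : ℝ := a * s + b * t with hr
  set fs := Metric.infDist (V s) ((C s)ᶜ) with hfs
  set ft := Metric.infDist (V t) ((C t)ᶜ) with hft
  show a * fs + b * ft ≤ Metric.infDist (V r) ((C r)ᶜ)
  by_cases htriv : (∀ q ∈ P, q = p) ∧ Y = Set.univ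
  · -- every cell is everything: all complements empty, all distances 0
    have hCuniv : ∀ τ : ℝ, (C τ)ᶜ = ∅ := by
      intro τ
      rw [Set.compl_empty_iff]
      ext y
      simp only [hC, Set.mem_inter_iff, Set.mem_univ, iff_true, htriv.2]
      refine ⟨fun q hq => ?_, trivial⟩
      rw [htriv.1 q hq]
      simp
    have h1 : fs = 0 := by rw [hfs, hCuniv]; simp [Metric.infDist_empty]
    have h2 : ft = 0 := by rw [hft, hCuniv]; simp [Metric.infDist_empty]
    have h3 : Metric.infDist (V r) ((C r)ᶜ) = 0 := by
      rw [hCuniv]; simp [Metric.infDist_empty]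
    rw [h1, h2, h3]; simp
  · have hne : ∀ τ : ℝ, ((C τ)ᶜ).Nonempty := fun τ => compl_lag_inter_nonempty _ htriv
    by_cases hD : 0 < a * fs + b * ft
    · by_contra hcon
      push_neg at hcon
      obtain ⟨y, hyC, hylt⟩ := (Metric.infDist_lt_iff (hne r)).mp hcon
      set D : ℝ := a * fs + b * ft with hDdef
      -- decompose
      set w : EuclideanSpace ℝ (Fin d) := y - V r with hw
      have hfs0 : 0 ≤ fs := Metric.infDist_nonneg
      have hft0 : 0 ≤ ft := Metric.infDist_nonneg
      have hball : ∀ τ ∈ Set.Icc (0:ℝ) 1, ∀ x : EuclideanSpace ℝ (Fin d),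
          dist x (V τ) < Metric.infDist (V τ) ((C τ)ᶜ) → x ∈ C τ := by
        intro τ hτ x hx
        by_contra hxC
        have := Metric.infDist_le_dist_of_mem (s := (C τ)ᶜ) (x := V τ) hxC
        rw [dist_comm] at this
        linarith
      have hxs : V s + (fs / D) • w ∈ C s := by
        rcases eq_or_lt_of_le hfs0 with h0 | h0
        · have hz : (fs / D) • w = 0 := by rw [← h0]; simp
          rw [hz, add_zero]; exact hVmem s hs
        · apply hball s hs
          have hd : dist (V s + (fs / D) • w) (V s) = fs / D * dist (V r) y := by
            rw [dist_eq_norm, add_sub_cancel_left, norm_smul, Real.norm_eq_abs,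
              abs_of_nonneg (div_nonneg hfs0 hD.le), hw, dist_comm, dist_eq_norm]
          rw [hd]
          calc fs / D * dist (V r) y < fs / D * D :=
                mul_lt_mul_of_pos_left hylt (by positivity)
            _ = fs := by field_simp
      have hxt : V t + (ft / D) • w ∈ C t := by
        rcases eq_or_lt_of_le hft0 with h0 | h0
        · have hz : (ft / D) • w = 0 := by rw [← h0]; simp
          rw [hz, add_zero]; exact hVmem t ht
        · apply hball t ht
          have hd : dist (V t + (ft / D) • w) (V t) = ft / D * dist (V r) y := by
            rw [dist_eq_norm, add_sub_cancel_left, norm_smul, Real.norm_eq_abs,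
              abs_of_nonneg (div_nonneg hft0 hD.le), hw, dist_comm, dist_eq_norm]
          rw [hd]
          calc ft / D * dist (V r) y < ft / D * D :=
                mul_lt_mul_of_pos_left hylt (by positivity)
            _ = ft := by field_simp
      -- combine
      have hcomb : a • (V s + (fs / D) • w) + b • (V t + (ft / D) • w) = y := by
        have hcoef : a * (fs / D) + b * (ft / D) = 1 := by field_simp; exact hDdef.symm
        have hVr : a • V s + b • V t = V r := by
          simp only [hV, hr]
          match_scalars <;> (try ring_nf) <;> (try linarith)
        calc a • (V s + (fs / D) • w) + b • (V t + (ft / D) • w)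
            = (a • V s + b • V t) + (a * (fs / D) + b * (ft / D)) • w := by module
          _ = V r + (1:ℝ) • w := by rw [hVr, hcoef]
          _ = y := by rw [one_smul, hw]; abel
      have hyCr : y ∈ C r := by
        rw [← hcomb]
        constructor
        · have hLag := mem_lag_comb ha hb hab hxs.1 hxt.1
          have hfun : (fun z => a * ((1 - s) * φ₀ z + s * φ₁ z)
              + b * ((1 - t) * φ₀ z + t * φ₁ z))
              = fun z => (1 - r) * φ₀ z + r * φ₁ z := by
            funext z
            have h1 : a = 1 - b := by linarith
            rw [hr, h1]; ring
          rwa [hfun] at hLag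
        · exact hYc hxs.2 hxt.2 ha hb hab
      exact hyC hyCr
    · push_neg at hD
      have := Metric.infDist_nonneg (x := V r) (s := (C r)ᶜ)
      linarith
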